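/- The pushforward of Lebesgue measure on ℝ under the map x ↦ (1 + x²)^{−1/2} equals the measure on ℝ given by the density t ↦ 2·t^{−2}·(1 − t²)^{−1/2} on the open interval (0, 1) and zero outside, with respect to Lebesgue measure. (Lemma 'l:alpha_v'(ii) of the paper: the explicit description of the measure α_v at a real place.) -/

import Mathlib

open MeasureTheory Set

noncomputable def Fm (x : ℝ) : ℝ := (1 + x ^ 2) ^ (-(1:ℝ)/2)
noncomputable def Gm (t : ℝ) : ℝ := (t⁻¹ ^ 2 - 1) ^ ((1:ℝ)/2)

lemma one_add_sq_pos (x : ℝ) : 0 < 1 + x ^ 2 := by positivity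

lemma Fm_cont : Continuous Fm := by
  apply Continuous.rpow_const (by continuity)
  intro x; left; exact (one_add_sq_pos x).ne'

lemma Gm_meas : Measurable Gm := by
  have h : Gm = fun t => Real.sqrt (t⁻¹ ^ 2 - 1) :=
    funext fun t => (Real.sqrt_eq_rpow _).symm
  rw [h]
  exact Real.continuous_sqrt.measurable.comp
    ((measurable_inv.pow_const 2).sub measurable_const)

lemma sub_pos_of_mem (t : ℝ) (ht : t ∈ Ioo (0:ℝ) 1) : 0 < t⁻¹ ^ 2 - 1 := by
  have h1 : 1 < t⁻¹ := (one_lt_inv₀ ht.1).2 ht.2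
  nlinarith

lemma Fm_Gm (t : ℝ) (ht : t ∈ Ioo (0:ℝ) 1) : Fm (Gm t) = t := by
  have hu := sub_pos_of_mem t ht
  have h1 : Gm t ^ 2 = t⁻¹ ^ 2 - 1 := by
    rw [Gm, ← Real.rpow_natCast ((t⁻¹ ^ 2 - 1) ^ ((1:ℝ)/2)) 2, ← Real.rpow_mul hu.le]
    norm_num
  rw [Fm, h1]
  have : 1 + (t⁻¹ ^ 2 - 1) = (t⁻¹) ^ 2 := by ring
  rw [this, ← Real.rpow_natCast t⁻¹ 2, ← Real.rpow_mul (inv_nonneg.2 ht.1.le),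
    ← Real.rpow_neg_one t, ← Real.rpow_mul ht.1.le]
  norm_num

lemma Gm_Fm (x : ℝ) (hx : 0 < x) : Gm (Fm x) = x := by
  have h0 := one_add_sq_pos x
  have h1 : (Fm x)⁻¹ ^ 2 = 1 + x ^ 2 := by
    rw [Fm, ← Real.rpow_neg_one, ← Real.rpow_natCast _ 2, ← Real.rpow_mul h0.le,
      ← Real.rpow_mul h0.le]
    norm_num
  rw [Gm, h1]
  have : 1 + x ^ 2 - 1 = x ^ 2 := by ring
  rw [this, ← Real.rpow_natCast x 2, ← Real.rpow_mul hx.le]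
  norm_num

lemma Fm_mem (x : ℝ) (hx : 0 < x) : Fm x ∈ Ioo (0:ℝ) 1 := by
  constructor
  · exact Real.rpow_pos_of_pos (one_add_sq_pos x) _
  · apply Real.rpow_lt_one_of_one_lt_of_neg
    · nlinarith
    · norm_num

lemma Gm_pos (t : ℝ) (ht : t ∈ Ioo (0:ℝ) 1) : 0 < Gm t :=
  Real.rpow_pos_of_pos (sub_pos_of_mem t ht) _

lemma Gm_image : Gm '' Ioo 0 1 = Ioi (0:ℝ) := by
  ext x
  constructor
  · rintro ⟨t, ht, rfl⟩; exact Gm_pos t ht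
  · intro hx; exact ⟨Fm x, Fm_mem x hx, Gm_Fm x hx⟩
noncomputable def Gd (t : ℝ) : ℝ :=
  (1:ℝ)/2 * (t⁻¹ ^ 2 - 1) ^ ((1:ℝ)/2 - 1) * (2 * t⁻¹ ^ 1 * (-(t ^ 2)⁻¹))


lemma Gd_deriv (t : ℝ) (ht : t ∈ Ioo (0:ℝ) 1) :
    HasDerivWithinAt Gm (Gd t) (Ioo 0 1) t := by
  have h1 : HasDerivAt (fun s : ℝ => s⁻¹) (-(t ^ 2)⁻¹) t := hasDerivAt_inv ht.1.ne'
  have h2 : HasDerivAt (fun s : ℝ => s⁻¹ ^ 2 - 1)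
      (2 * t⁻¹ ^ 1 * (-(t ^ 2)⁻¹)) t := by
    simpa using (h1.pow 2).sub_const 1
  have h3 := h2.rpow_const (p := (1:ℝ)/2) (Or.inl (sub_pos_of_mem t ht).ne')
  have h4 := h3.hasDerivWithinAt (s := Ioo 0 1)
  have h5 : Gd t = 2 * t⁻¹ ^ 1 * -(t ^ 2)⁻¹ * ((1:ℝ)/2) * (t⁻¹ ^ 2 - 1) ^ ((1:ℝ)/2 - 1) := by
    rw [Gd]; ring
  rw [h5]
  exact h4

lemma rpow_half_sub (t : ℝ) (ht : t ∈ Ioo (0:ℝ) 1) :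
    (t⁻¹ ^ 2 - 1) ^ (-(1:ℝ)/2) = t * (1 - t ^ 2) ^ (-(1:ℝ)/2) := by
  have h1 : (0:ℝ) < 1 - t ^ 2 := by nlinarith [ht.1, ht.2]
  have ht0 : (0:ℝ) < t := ht.1
  have key : t⁻¹ ^ 2 - 1 = (1 - t ^ 2) * t⁻¹ ^ 2 := by
    field_simp
  rw [key, Real.mul_rpow h1.le (by positivity)]
  have : (t⁻¹ ^ 2 : ℝ) ^ (-(1:ℝ)/2) = t := by
    rw [← Real.rpow_natCast t⁻¹ 2, ← Real.rpow_mul (by positivity),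
      ← Real.rpow_neg_one t, ← Real.rpow_mul ht0.le]
    norm_num
  rw [this]; ring

lemma Gd_abs (t : ℝ) (ht : t ∈ Ioo (0:ℝ) 1) :
    |Gd t| = t⁻¹ ^ 2 * (1 - t ^ 2) ^ (-(1:ℝ)/2) := by
  have ht0 : (0:ℝ) < t := ht.1
  have h1 : ((1:ℝ)/2 - 1) = -(1:ℝ)/2 := by norm_num
  have h2 : Gd t = -((t⁻¹ ^ 2 - 1) ^ (-(1:ℝ)/2) * t⁻¹ * (t ^ 2)⁻¹) := by
    rw [Gd, h1]; ring
  rw [h2, abs_neg, abs_of_nonneg (mul_nonneg (mul_nonneg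
    (Real.rpow_nonneg (sub_pos_of_mem t ht).le _) (by positivity)) (by positivity)), rpow_half_sub t ht]
  field_simp
lemma rpow_neg_half_eq (x : ℝ) : x ^ (-(1:ℝ)/2) = (Real.sqrt x)⁻¹ := by
  rcases lt_or_ge x 0 with h | h
  · rw [Real.rpow_def_of_neg h]
    rw [Real.sqrt_eq_zero_of_nonpos h.le]
    norm_num
    rw [show ((1:ℝ)/2 * Real.pi) = Real.pi/2 by ring, Real.cos_pi_div_two]
  · rw [show (-(1:ℝ)/2) = -((1:ℝ)/2) by ring, Real.rpow_neg h, ← Real.sqrt_eq_rpow]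

noncomputable def Dm (t : ℝ) : ENNReal :=
  ENNReal.ofReal (t⁻¹ ^ 2 * (1 - t ^ 2) ^ (-(1:ℝ)/2))

lemma Dm_def (t : ℝ) : Dm t = ENNReal.ofReal (t⁻¹ ^ 2 * (1 - t ^ 2) ^ (-(1:ℝ)/2)) := rfl

lemma Dm_meas : Measurable Dm := by
  have h : Dm = fun t => ENNReal.ofReal (t⁻¹ ^ 2 * (Real.sqrt (1 - t ^ 2))⁻¹) :=
    funext fun t => by rw [Dm_def, rpow_neg_half_eq]
  rw [h]
  exact ENNReal.measurable_ofReal.comp <| (measurable_inv.pow_const 2).mul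
    ((Real.continuous_sqrt.measurable.comp (by measurability)).inv)

lemma Gm_inj : InjOn Gm (Ioo 0 1) := fun a ha b hb h => by
  rw [← Fm_Gm a ha, ← Fm_Gm b hb, h]

theorem stmt_13 :
    Measure.map (fun x : ℝ => (1 + x ^ 2) ^ (-(1 : ℝ) / 2)) volume =
      volume.withDensity (fun t : ℝ =>
        if t ∈ Set.Ioo (0 : ℝ) 1 then
          ENNReal.ofReal (2 * t⁻¹ ^ 2 * (1 - t ^ 2) ^ (-(1 : ℝ) / 2))
        else 0) := by
  have hFm : (fun x : ℝ => (1 + x ^ 2) ^ (-(1 : ℝ) / 2)) = Fm := rfl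
  set W : Measure ℝ :=
    (volume.restrict (Ioo 0 1)).withDensity fun t => ENNReal.ofReal |Gd t| with hWdef
  -- Step 1: jacobian change of variables
  have step1 : Measure.map Gm W = volume.restrict (Ioi 0) := by
    have h := map_withDensity_abs_det_fderiv_eq_addHaar (μ := volume) measurableSet_Ioo.nullMeasurableSet
      (f' := fun x => ContinuousLinearMap.smulRight (1 : ℝ →L[ℝ] ℝ) (Gd x))
      (fun x hx => (Gd_deriv x hx).hasFDerivWithinAt) Gm_inj
    simpa only [ContinuousLinearMap.smulRight_one_eq_toSpanSingleton, ContinuousLinearMap.det_toSpanSingleton, Gm_image] using h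
  -- Step 2: pushforward of restrict (Ioi 0) under Fm is W
  have step2 : Measure.map Fm (volume.restrict (Ioi 0)) = W := by
    rw [← step1, Measure.map_map Fm_cont.measurable Gm_meas]
    have hmem : ∀ᵐ t ∂W, t ∈ Ioo (0:ℝ) 1 :=
      (withDensity_absolutelyContinuous _ _).ae_le (ae_restrict_mem measurableSet_Ioo)
    have hcongr : (Fm ∘ Gm) =ᵐ[W] id := hmem.mono fun t ht => Fm_Gm t ht
    rw [Measure.map_congr hcongr, Measure.map_id]
  -- Step 3: negative half
  have step3 : Measure.map Fm (volume.restrict (Iio 0)) = W := by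
    have hneg : Measure.map Neg.neg (volume.restrict (Ioi (0:ℝ)))
        = volume.restrict (Iio 0) := by
      have hpre : Neg.neg ⁻¹' (Iio (0:ℝ)) = Ioi 0 := by ext x; simp
      rw [← hpre, ← Measure.restrict_map measurable_neg measurableSet_Iio,
        Measure.map_neg_eq_self (volume : Measure ℝ)]
    rw [← hneg, Measure.map_map Fm_cont.measurable measurable_neg]
    have : Fm ∘ Neg.neg = Fm := funext fun x => by simp [Fm]
    rw [this, step2]
  -- Step 4: rewrite W as a withDensity of volume
  have step4 : W = volume.withDensity ((Ioo 0 1).indicator Dm) := by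
    rw [withDensity_indicator measurableSet_Ioo]
    exact withDensity_congr_ae <| (ae_restrict_iff' measurableSet_Ioo).2 <|
      Filter.Eventually.of_forall fun t ht => by
        show ENNReal.ofReal |Gd t| = Dm t
        rw [Dm_def, Gd_abs t ht]
  -- assemble
  have hsplit : (volume : Measure ℝ) = volume.restrict (Iio 0) + volume.restrict (Ioi 0) := by
    rw [MeasureTheory.restrict_Ioi_eq_restrict_Ici, ← compl_Iio,
      Measure.restrict_add_restrict_compl measurableSet_Iio]
  rw [hFm]
  calc Measure.map Fm volume
      = Measure.map Fm (volume.restrict (Iio 0)) + Measure.map Fm (volume.restrict (Ioi 0)) := by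
        conv_lhs => rw [hsplit]
        exact Measure.map_add _ _ Fm_cont.measurable
    _ = volume.withDensity ((Ioo 0 1).indicator Dm)
        + volume.withDensity ((Ioo 0 1).indicator Dm) := by rw [step2, step3, step4]
    _ = volume.withDensity ((Ioo 0 1).indicator Dm + (Ioo 0 1).indicator Dm) :=
        (withDensity_add_left (Dm_meas.indicator measurableSet_Ioo) _).symm
    _ = volume.withDensity (fun t : ℝ =>
          if t ∈ Set.Ioo (0 : ℝ) 1 then
            ENNReal.ofReal (2 * t⁻¹ ^ 2 * (1 - t ^ 2) ^ (-(1 : ℝ) / 2))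
          else 0) := by
        congr 1
        funext t
        by_cases ht : t ∈ Ioo (0:ℝ) 1
        · have h1 : (0:ℝ) < 1 - t ^ 2 := by nlinarith [ht.1, ht.2]
          simp only [Pi.add_apply, Set.indicator_of_mem ht, if_pos ht, Dm_def]
          rw [← ENNReal.ofReal_add (by positivity) (by positivity)]
          congr 1
          ring
        · simp only [Pi.add_apply, Set.indicator_of_notMem ht, if_neg ht, add_zero]
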